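/- Let G be a connected simple graph on n vertices (n ≥ 2) with Laplacian matrix L and second-smallest Laplacian eigenvalue λ₂(L) > 0, and let B be a k×k real symmetric positive semidefinite matrix. Let y ∈ ℝ^{nk} be written in n blocks y₁, …, y_n ∈ ℝ^k and suppose Σ_{i=1}^n y_i = 0 (i.e., (1_nᵀ ⊗ I_k) y = 0). Then yᵀ (L ⊗ B) y ≥ λ₂(L) · Σ_{i=1}^n y_iᵀ B y_i, where L ⊗ B denotes the Kronecker product. -/

import Mathlib

open Matrix
open scoped Kronecker RealInnerProductSpace
open Finset

section Fiedler

variable {n : ℕ}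

lemma fiedler_bound (hn : 2 ≤ n) (G : SimpleGraph (Fin n)) [DecidableRel G.Adj]
    (hG : G.Connected) (hL : (G.lapMatrix ℝ).IsHermitian)
    (z : Fin n → ℝ) (hz : ∑ i, z i = 0) :
    (hL.eigenvalues ∘ Tuple.sort hL.eigenvalues) ⟨1, Nat.lt_of_lt_of_le one_lt_two hn⟩ * (z ⬝ᵥ z) ≤
      z ⬝ᵥ (G.lapMatrix ℝ) *ᵥ z := by
  classical
  set b := hL.eigenvectorBasis with hb
  set σ := Tuple.sort hL.eigenvalues with hσ
  set c : Fin n → ℝ := fun i => (b i : Fin n → ℝ) ⬝ᵥ z with hc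
  have hinner : ∀ (x w : EuclideanSpace ℝ (Fin n)), ⟪x, w⟫ = (x : Fin n → ℝ) ⬝ᵥ w := by
    intro x w
    simp [PiLp.inner_apply, dotProduct, mul_comm]
  -- expansion of z
  have hzrepr : (z : Fin n → ℝ) = fun j => ∑ i, c i * (b i : Fin n → ℝ) j := by
    have h := b.sum_repr' (WithLp.toLp 2 z : EuclideanSpace ℝ (Fin n))
    funext j
    have h2 := congrFun (congrArg (fun (v : EuclideanSpace ℝ (Fin n)) => (v : Fin n → ℝ)) h) j
    simp only [WithLp.ofLp_toLp] at h2
    simp only [← h2]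
    rw [WithLp.ofLp_sum, Finset.sum_apply]
    simp [smul_eq_mul, hinner, hc]
  -- dot of z with any sum of basis vectors
  have hdot : ∀ (d : Fin n → ℝ),
      z ⬝ᵥ (fun j => ∑ i, d i * (b i : Fin n → ℝ) j) = ∑ i, d i * c i := by
    intro d
    simp only [dotProduct, Finset.mul_sum]
    rw [Finset.sum_comm]
    refine Finset.sum_congr rfl fun i _ => ?_
    simp only [hc, dotProduct, Finset.mul_sum]
    congr 1; funext j; ring
  -- z ⬝ᵥ z = ∑ c i ^ 2
  have hzz : z ⬝ᵥ z = ∑ i, c i * c i := by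
    conv_lhs => rw [show (z ⬝ᵥ z) = z ⬝ᵥ (fun j => ∑ i, c i * (b i : Fin n → ℝ) j) by rw [← hzrepr]]
    exact hdot c
  -- z ⬝ᵥ L z = ∑ λ i * c i ^ 2
  have hmul : (G.lapMatrix ℝ) *ᵥ z = fun j => ∑ i, (c i * hL.eigenvalues i) * (b i : Fin n → ℝ) j := by
    funext j
    conv_lhs => rw [hzrepr]
    have : ∀ j, ((G.lapMatrix ℝ) *ᵥ (fun j => ∑ i, c i * (b i : Fin n → ℝ) j)) j
        = ∑ i, c i * (((G.lapMatrix ℝ) *ᵥ (b i : Fin n → ℝ)) j) := by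
      intro j
      simp only [mulVec, dotProduct, Finset.mul_sum]
      rw [Finset.sum_comm]
      refine Finset.sum_congr rfl fun i _ => Finset.sum_congr rfl fun l _ => by ring
    rw [this j]
    refine Finset.sum_congr rfl fun i _ => ?_
    rw [show ((G.lapMatrix ℝ) *ᵥ (b i : Fin n → ℝ)) j = hL.eigenvalues i * (b i : Fin n → ℝ) j from
      congrFun (hL.mulVec_eigenvectorBasis i) j]
    ring
  have hquad : z ⬝ᵥ (G.lapMatrix ℝ) *ᵥ z = ∑ i, hL.eigenvalues i * (c i * c i) := by
    rw [hmul, hdot]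
    refine Finset.sum_congr rfl fun i _ => by ring
  -- all eigenvalues are nonnegative
  have hpsd := SimpleGraph.posSemidef_lapMatrix ℝ G
  have hnonneg : ∀ i, 0 ≤ hL.eigenvalues i := fun i => hpsd.eigenvalues_nonneg i
  -- the determinant is zero
  have hne : Nonempty (Fin n) := ⟨⟨0, by omega⟩⟩
  have hdet : (G.lapMatrix ℝ).det = 0 := by
    rw [← Matrix.exists_mulVec_eq_zero_iff]
    refine ⟨fun _ => 1, ?_, G.lapMatrix_mulVec_const_eq_zero⟩
    intro h
    exact one_ne_zero (congrFun h ⟨0, by omega⟩)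
  have hex : ∃ i, hL.eigenvalues i = 0 := by
    have hprod := hL.det_eq_prod_eigenvalues
    rw [hdet] at hprod
    obtain ⟨i, _, hi⟩ := Finset.prod_eq_zero_iff.mp hprod.symm
    exact ⟨i, by exact_mod_cast hi⟩
  have hσmono := Tuple.monotone_sort hL.eigenvalues
  set i0 := σ ⟨0, by omega⟩ with hi0
  have h0 : hL.eigenvalues i0 = 0 := by
    refine le_antisymm ?_ (hnonneg _)
    obtain ⟨i, hi⟩ := hex
    calc hL.eigenvalues i0 = (hL.eigenvalues ∘ σ) ⟨0, by omega⟩ := rfl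
      _ ≤ (hL.eigenvalues ∘ σ) (σ.symm i) := hσmono (Fin.mk_le_mk.mpr (Nat.zero_le _))
      _ = 0 := by simp [hi]
  -- eigenvector at i0 is constant
  have hker : (G.lapMatrix ℝ) *ᵥ (b i0 : Fin n → ℝ) = 0 := by
    have := hL.mulVec_eigenvectorBasis i0
    rw [show (G.lapMatrix ℝ) *ᵥ (b i0 : Fin n → ℝ)
        = hL.eigenvalues i0 • (b i0 : Fin n → ℝ) from this, h0]
    simp
  have hconst : ∀ i j, (b i0 : Fin n → ℝ) i = (b i0 : Fin n → ℝ) j := by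
    have h1 : Matrix.toLin' (G.lapMatrix ℝ) (b i0 : Fin n → ℝ) = 0 := by
      rw [Matrix.toLin'_apply, hker]
    have h2 := (G.lapMatrix_mulVec_eq_zero_iff_forall_reachable
      (x := (b i0 : Fin n → ℝ))).mp hker
    exact fun i j => h2 i j (hG.preconnected i j)
  have hc0 : c i0 = 0 := by
    have : c i0 = ∑ j, (b i0 : Fin n → ℝ) ⟨0, by omega⟩ * z j := by
      refine Finset.sum_congr rfl fun j _ => ?_
      rw [hconst j ⟨0, by omega⟩]
    rw [this, ← Finset.mul_sum, hz, mul_zero]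
  -- conclude
  rw [hquad, hzz, Finset.mul_sum]
  apply Finset.sum_le_sum
  intro i _
  by_cases h : i = i0
  · rw [h, hc0]; simp
  · have hle : (hL.eigenvalues ∘ σ) ⟨1, by omega⟩ ≤ hL.eigenvalues i := by
      have hj : (⟨1, by omega⟩ : Fin n) ≤ σ.symm i := by
        refine Fin.mk_le_mk.mpr ?_
        rcases Nat.eq_zero_or_pos (σ.symm i).val with h0' | h0'
        · exfalso
          apply h
          have : σ.symm i = ⟨0, by omega⟩ := Fin.ext h0'
          rw [← Equiv.apply_symm_apply σ i, this]
        · exact h0'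
      calc (hL.eigenvalues ∘ σ) ⟨1, by omega⟩ ≤ (hL.eigenvalues ∘ σ) (σ.symm i) := hσmono hj
        _ = hL.eigenvalues i := by simp
    exact mul_le_mul_of_nonneg_right hle (mul_self_nonneg _)

end Fiedler

lemma sum_rotate {α β γ : Type*} [Fintype α] [Fintype β] [Fintype γ]
    (f : α → β → γ → ℝ) :
    ∑ i, ∑ j, ∑ c, f i j c = ∑ c, ∑ i, ∑ j, f i j c := by
  calc ∑ i, ∑ j, ∑ c, f i j c = ∑ i, ∑ c, ∑ j, f i j c :=
        Finset.sum_congr rfl fun i _ => Finset.sum_comm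
    _ = ∑ c, ∑ i, ∑ j, f i j c := Finset.sum_comm


/-- For a connected simple graph `G` on `n ≥ 2` vertices with Laplacian `L` and
second-smallest eigenvalue `λ₂(L)`, and a `k×k` real symmetric positive semidefinite
matrix `B`: for `y ∈ ℝ^{nk}` with blocks `y₁,…,yₙ ∈ ℝᵏ` summing to zero,
`yᵀ (L ⊗ B) y ≥ λ₂(L) · Σᵢ yᵢᵀ B yᵢ`. -/
theorem laplacian_kronecker_quadratic_lower_bound
    (n k : ℕ) (hn : 2 ≤ n) (G : SimpleGraph (Fin n)) [DecidableRel G.Adj]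
    (hG : G.Connected)
    (hL : (G.lapMatrix ℝ).IsHermitian)
    (B : Matrix (Fin k) (Fin k) ℝ) (hB : B.PosSemidef)
    (y : Fin n × Fin k → ℝ) (hy : ∀ a : Fin k, ∑ i : Fin n, y (i, a) = 0) :
    (hL.eigenvalues ∘ Tuple.sort hL.eigenvalues) ⟨1, by omega⟩ *
        ∑ i : Fin n, (fun a => y (i, a)) ⬝ᵥ B.mulVec (fun a => y (i, a)) ≤
      y ⬝ᵥ ((G.lapMatrix ℝ) ⊗ₖ B).mulVec y := by
  classical
  obtain ⟨C, hC⟩ : ∃ C : Matrix (Fin k) (Fin k) ℝ, B = Cᴴ * C := by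
    open scoped MatrixOrder in
    exact CStarAlgebra.nonneg_iff_eq_star_mul_self.mp hB.nonneg
  have hC' : B = Cᵀ * C := by
    rw [hC, conjTranspose_eq_transpose_of_trivial]
  set w : Fin k → Fin n → ℝ := fun c i => ∑ a, C c a * y (i, a) with hw
  have hwvec : ∀ i, (fun c => w c i) = C *ᵥ (fun a => y (i, a)) := by
    intro i; funext c; simp [hw, mulVec, dotProduct]
  -- key: cross terms
  have hw2 : ∀ i j, ∑ c, w c i * w c j = (fun a => y (i,a)) ⬝ᵥ B.mulVec (fun b => y (j,b)) := by
    intro i j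
    calc ∑ c, w c i * w c j
        = (C *ᵥ fun a => y (i,a)) ⬝ᵥ (C *ᵥ fun b => y (j,b)) := by
          rw [← hwvec i, ← hwvec j]; rfl
      _ = (fun a => y (i,a)) ⬝ᵥ B.mulVec (fun b => y (j,b)) := by
          conv_rhs => rw [hC', ← mulVec_mulVec, dotProduct_mulVec, vecMul_transpose]
  -- w columns sum to zero
  have hwsum : ∀ c, ∑ i, w c i = 0 := by
    intro c
    simp only [hw]
    rw [Finset.sum_comm]
    simp [← Finset.mul_sum, hy]
  -- expansion of the kronecker quadratic form
  have expand : y ⬝ᵥ ((G.lapMatrix ℝ) ⊗ₖ B).mulVec y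
      = ∑ c, w c ⬝ᵥ (G.lapMatrix ℝ).mulVec (w c) := by
    have e1 : y ⬝ᵥ ((G.lapMatrix ℝ) ⊗ₖ B).mulVec y
        = ∑ i, ∑ j, ∑ c, (G.lapMatrix ℝ) i j * (w c i * w c j) := by
      have e0 : y ⬝ᵥ ((G.lapMatrix ℝ) ⊗ₖ B).mulVec y
          = ∑ i, ∑ j, (G.lapMatrix ℝ) i j * ((fun a => y (i,a)) ⬝ᵥ B.mulVec (fun b => y (j,b))) := by
        simp only [dotProduct, mulVec, kroneckerMap_apply, Fintype.sum_prod_type,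
          Finset.mul_sum, Finset.sum_mul]
        refine Finset.sum_congr rfl fun i _ => ?_
        rw [Finset.sum_comm]
        refine Finset.sum_congr rfl fun j _ => Finset.sum_congr rfl fun a _ =>
          Finset.sum_congr rfl fun b _ => by ring
      rw [e0]
      refine Finset.sum_congr rfl fun i _ => Finset.sum_congr rfl fun j _ => ?_
      rw [← hw2 i j, Finset.mul_sum]
    rw [e1, sum_rotate]
    refine Finset.sum_congr rfl fun c _ => ?_
    simp only [dotProduct, mulVec, Finset.mul_sum]
    refine Finset.sum_congr rfl fun i _ => Finset.sum_congr rfl fun j _ => by ring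
  -- block sum as sum of dot squares
  have eB : ∑ i : Fin n, (fun a => y (i, a)) ⬝ᵥ B.mulVec (fun a => y (i, a))
      = ∑ c, w c ⬝ᵥ w c := by
    calc ∑ i : Fin n, (fun a => y (i, a)) ⬝ᵥ B.mulVec (fun a => y (i, a))
        = ∑ i, ∑ c, w c i * w c i := Finset.sum_congr rfl fun i _ => (hw2 i i).symm
      _ = ∑ c, ∑ i, w c i * w c i := Finset.sum_comm
      _ = ∑ c, w c ⬝ᵥ w c := rfl
  rw [expand, eB, Finset.mul_sum]
  exact Finset.sum_le_sum fun c _ =>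
    fiedler_bound hn G hG hL (w c) (hwsum c)
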